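/- Let n ≥ 1 and let f be a fixed-point-free involution on ZMod (2n). Then the number of Gaussian-odd chords of the chord diagram f is even. -/

import Mathlib

/-- The open arc from `u` to `v` on the cyclic set `ZMod N`: the points
`u+1, u+2, …, v-1` reached from `u` by repeatedly adding `1` before reaching `v`. -/
def openArc {N : ℕ} (u v : ZMod N) : Set (ZMod N) :=
  {w | 0 < (w - u).val ∧ (w - u).val < (v - u).val}

/-- For a chord diagram given by the fixed-point-free involution `f`, the chord
`{b, f b}` is linked with the chord `{a, f a}` if exactly one of `b`, `f b`
lies in the open arc from `a` to `f a`. -/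
def Linked {N : ℕ} (f : ZMod N → ZMod N) (a b : ZMod N) : Prop :=
  Xor' (b ∈ openArc a (f a)) (f b ∈ openArc a (f a))

/-- The number of chords of the chord diagram `f` linked with the chord `{a, f a}`. -/
noncomputable def linkedCount {N : ℕ} (f : ZMod N → ZMod N) (a : ZMod N) : ℕ :=
  Set.ncard {d : Set (ZMod N) | ∃ b, d = {b, f b} ∧ Linked f a b}

/-- The chord `{a, f a}` is Gaussian-even: the number of chords linked with it is even. -/
def GaussEven {N : ℕ} (f : ZMod N → ZMod N) (a : ZMod N) : Prop :=
  Even (linkedCount f a)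

section Aux
variable {N : ℕ} [NeZero N]

lemma subval (x y : ZMod N) :
    (x - y).val < N ∧ ((x - y).val + y.val = x.val ∨ (x - y).val + y.val = x.val + N) := by
  refine ⟨ZMod.val_lt _, ?_⟩
  have h : (x - y) + y = x := by ring
  have h2 : ((x - y).val + y.val) % N = x.val := by rw [← ZMod.val_add, h]
  have hx := ZMod.val_lt x
  have hy := ZMod.val_lt y
  have hxy := ZMod.val_lt (x - y)
  rcases lt_or_ge ((x - y).val + y.val) N with h3 | h3
  · left; rwa [Nat.mod_eq_of_lt h3] at h2
  · right
    rw [Nat.mod_eq_sub_mod h3, Nat.mod_eq_of_lt (by omega)] at h2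
    omega

lemma valne {x y : ZMod N} (h : x ≠ y) : x.val ≠ y.val :=
  fun hv => h (ZMod.val_injective N hv)

lemma not_linked_self (f : ZMod N → ZMod N) (a : ZMod N) : ¬ Linked f a a := by
  simp [Linked, openArc, Xor', sub_self, ZMod.val_zero]

lemma linked_symm (f : ZMod N → ZMod N) (hinv : Function.Involutive f)
    (hfpf : ∀ x, f x ≠ x) (a b : ZMod N) : Linked f a b ↔ Linked f b a := by
  by_cases hba : b = a
  · subst hba; rfl
  by_cases hbfa : b = f a
  · subst hbfa
    have hfa : f (f a) = a := hinv a
    simp [Linked, openArc, Xor', hfa, sub_self, ZMod.val_zero]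
  have hfbfa : f b ≠ f a := fun h => hba (by rw [← hinv b, h, hinv])
  have hfba : f b ≠ a := fun h => hbfa (by rw [← hinv b, h])
  have hfaa : f a ≠ a := hfpf a
  have hfbb : f b ≠ b := hfpf b
  have d1 := valne hba
  have d2 := valne hbfa
  have d3 := valne hfbfa
  have d4 := valne hfba
  have d5 := valne hfaa
  have d6 := valne hfbb
  have s1 := subval (b) (a)
  have s2 := subval (f b) (a)
  have s3 := subval (f a) (a)
  have s4 := subval (a) (b)
  have s5 := subval (f a) (b)
  have s6 := subval (f b) (b)
  have va := ZMod.val_lt a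
  have vb := ZMod.val_lt b
  have vfa := ZMod.val_lt (f a)
  have vfb := ZMod.val_lt (f b)
  simp only [Linked, openArc, Set.mem_setOf_eq, Xor', xor_def] at *
  omega

lemma linked_apply (f : ZMod N → ZMod N) (hinv : Function.Involutive f)
    (a b : ZMod N) : Linked f a (f b) ↔ Linked f a b := by
  unfold Linked
  rw [hinv b]
  exact iff_of_eq (xor_comm _ _)

lemma linked_left (f : ZMod N → ZMod N) (hinv : Function.Involutive f)
    (hfpf : ∀ x, f x ≠ x) (a b : ZMod N) : Linked f (f a) b ↔ Linked f a b := by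
  rw [linked_symm f hinv hfpf, linked_apply f hinv, linked_symm f hinv hfpf]

end Aux

section Count
variable {N : ℕ} [NeZero N]
open Finset
open scoped Classical

lemma chord_ncard (f : ZMod N → ZMod N) (hinv : Function.Involutive f)
    (hfpf : ∀ x, f x ≠ x) (P : ZMod N → Prop) [DecidablePred P] (hP : ∀ a, P (f a) ↔ P a) :
    {d : Set (ZMod N) | ∃ a, d = {a, f a} ∧ P a}.ncard
      = (Finset.univ.filter (fun a : ZMod N => a.val < (f a).val ∧ P a)).card := by
  classical
  have hset : {d : Set (ZMod N) | ∃ a, d = {a, f a} ∧ P a}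
      = (fun a => ({a, f a} : Set (ZMod N))) ''
        ↑(Finset.univ.filter (fun a : ZMod N => a.val < (f a).val ∧ P a)) := by
    ext d
    simp only [Set.mem_setOf_eq, Set.mem_image, Finset.coe_filter, Finset.mem_univ, true_and,
      Set.mem_setOf_eq]
    constructor
    · rintro ⟨a, rfl, hPa⟩
      rcases lt_or_gt_of_ne (valne (Ne.symm (hfpf a))) with h | h
      · exact ⟨a, ⟨h, hPa⟩, rfl⟩
      · refine ⟨f a, ⟨by rw [hinv a]; exact h, (hP a).mpr hPa⟩, ?_⟩
        rw [hinv a, Set.pair_comm]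
    · rintro ⟨a, ⟨_, hPa⟩, rfl⟩; exact ⟨a, rfl, hPa⟩
  rw [hset, Set.ncard_image_of_injOn, Set.ncard_coe_finset]
  intro x hx y hy hxy
  simp only [Finset.coe_filter, Set.mem_setOf_eq] at hx hy
  have hxy' : ({x, f x} : Set (ZMod N)) = {y, f y} := hxy
  have hmem : x ∈ ({y, f y} : Set (ZMod N)) := by
    rw [← hxy']; exact Set.mem_insert _ _
  rcases hmem with h | h
  · exact h
  · exfalso
    simp only [Set.mem_singleton_iff] at h
    have hfx : f x = y := by rw [h, hinv]
    have h1 := hx.2.1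
    have h2 := hy.2.1
    rw [hfx] at h1
    rw [h] at h1
    omega

lemma linkedCount_eq (f : ZMod N → ZMod N) (hinv : Function.Involutive f)
    (hfpf : ∀ x, f x ≠ x) (a : ZMod N) :
    linkedCount f a
      = (Finset.univ.filter (fun b : ZMod N => b.val < (f b).val ∧ Linked f a b)).card := by
  classical
  exact chord_ncard f hinv hfpf (Linked f a) (fun b => linked_apply f hinv a b)

lemma linkedCount_f (f : ZMod N → ZMod N) (hinv : Function.Involutive f)
    (hfpf : ∀ x, f x ≠ x) (a : ZMod N) : linkedCount f (f a) = linkedCount f a := by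
  unfold linkedCount
  congr 1
  ext d
  simp only [Set.mem_setOf_eq]
  constructor <;> rintro ⟨b, rfl, hb⟩
  · exact ⟨b, rfl, (linked_left f hinv hfpf a b).mp hb⟩
  · exact ⟨b, rfl, (linked_left f hinv hfpf a b).mpr hb⟩

end Count

section Handshake
open Finset

lemma natCast_zmod_two (k : ℕ) : (k : ZMod 2) = if Even k then 0 else 1 := by
  rcases Nat.even_or_odd k with ⟨m, rfl⟩ | ⟨m, rfl⟩
  · simp only [if_pos (by exact ⟨m, rfl⟩ : Even (m + m))]
    push_cast
    exact CharTwo.add_self_eq_zero _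
  · rw [if_neg (by simp [Nat.even_add_one, Nat.even_mul])]
    push_cast
    rw [show ((2:ZMod 2)) = 0 from by decide]
    ring

lemma handshake {α : Type*} [DecidableEq α] (T : Finset α) (R : α → α → Prop) [DecidableRel R]
    (hsymm : ∀ a b, R a b ↔ R b a) (hirr : ∀ a, ¬ R a a) :
    Even ((T.filter (fun a => ¬ Even ((T.filter (R a)).card))).card) := by
  suffices h0 : ((T.filter (fun a => ¬ Even ((T.filter (R a)).card))).card : ZMod 2) = 0 by
    obtain ⟨k, hk⟩ := (ZMod.natCast_eq_zero_iff _ 2).mp h0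
    exact ⟨k, by omega⟩
  have h1 : ((T.filter (fun a => ¬ Even ((T.filter (R a)).card))).card : ZMod 2)
      = ∑ a ∈ T, ((T.filter (R a)).card : ZMod 2) := by
    rw [Finset.card_filter]
    push_cast
    refine Finset.sum_congr rfl fun a _ => ?_
    rw [natCast_zmod_two]
    by_cases h : Even ((T.filter (R a)).card) <;> simp [h]
  rw [h1]
  have h2 : ∀ a, ((T.filter (R a)).card : ZMod 2)
      = ∑ b ∈ T, (if R a b then (1 : ZMod 2) else 0) := by
    intro a
    rw [Finset.card_filter]
    push_cast
    rfl
  simp only [h2]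
  rw [← Finset.sum_product']
  refine Finset.sum_involution (fun p _ => (p.2, p.1)) ?_ ?_ ?_ ?_
  · intro p _
    dsimp only
    by_cases h : R p.1 p.2
    · rw [if_pos h, if_pos ((hsymm p.1 p.2).mp h)]
      exact CharTwo.add_self_eq_zero _
    · rw [if_neg h, if_neg (fun hc => h ((hsymm p.2 p.1).mp hc))]
      exact add_zero 0
  · intro p _ h
    intro hc
    have : p.2 = p.1 := congrArg Prod.fst hc
    rw [this] at h
    simp [hirr p.1] at h
  · intro p hp
    rw [Finset.mem_product] at *
    exact ⟨hp.2, hp.1⟩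
  · intro p _
    rfl

/-- The number of Gaussian-odd chords of a chord diagram is even. -/
theorem even_number_of_odd_chords (n : ℕ) (hn : 1 ≤ n)
    (f : ZMod (2 * n) → ZMod (2 * n))
    (hinv : Function.Involutive f) (hfpf : ∀ x, f x ≠ x) :
    Even (Set.ncard {d : Set (ZMod (2 * n)) | ∃ a, d = {a, f a} ∧ ¬ GaussEven f a}) := by
  classical
  have : NeZero (2 * n) := ⟨by omega⟩
  have hge : ∀ a, GaussEven f (f a) ↔ GaussEven f a := fun a => by
    unfold GaussEven
    rw [linkedCount_f f hinv hfpf]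
  rw [chord_ncard f hinv hfpf (fun a => ¬ GaussEven f a) (fun a => not_congr (hge a))]
  set T : Finset (ZMod (2 * n)) := Finset.univ.filter (fun a => a.val < (f a).val) with hT
  have hTf : ∀ a, T.filter (Linked f a)
      = Finset.univ.filter (fun b => b.val < (f b).val ∧ Linked f a b) := fun a =>
    Finset.filter_filter _ _ _
  have key := handshake T (Linked f) (linked_symm f hinv hfpf) (not_linked_self f)
  have hpred : Finset.univ.filter (fun a : ZMod (2 * n) => a.val < (f a).val ∧ ¬ GaussEven f a)
      = T.filter (fun a => ¬ Even ((T.filter (Linked f a)).card)) := by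
    rw [hT, Finset.filter_filter]
    apply Finset.filter_congr
    intro a _
    have : linkedCount f a = ((T.filter (Linked f a)).card) := by
      rw [linkedCount_eq f hinv hfpf a, hTf a]
    simp only [GaussEven, this]
    exact Iff.rfl
  rw [hpred]
  exact key
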